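/- For any connected graph G, mdim(G) ≤ |V(G)| − ζ(G), where ζ(G) is the number of cut vertices of G. -/

import Mathlib

open SimpleGraph

variable {V : Type*}

/-- Distance from a vertex `w` to an (unordered) edge `e`:
the minimum of the distances to the two endpoints. -/
noncomputable def edgeVertexDist (G : SimpleGraph V) (w : V) (e : Sym2 V) : ℕ :=
  Sym2.lift ⟨fun a b => min (G.dist a w) (G.dist b w), fun a b => by simp [min_comm]⟩ e

/-- Distance from a vertex `w` to a mixed element (vertex or edge). -/
noncomputable def mixedDist (G : SimpleGraph V) (w : V) : V ⊕ G.edgeSet → ℕ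
  | Sum.inl v => G.dist v w
  | Sum.inr e => edgeVertexDist G w e.val

/-- `W` is a mixed resolving set: every two distinct mixed elements are
distinguished by the distance to some vertex of `W`. -/
def IsMixedResolving (G : SimpleGraph V) (W : Set V) : Prop :=
  ∀ x y : V ⊕ G.edgeSet, x ≠ y → ∃ w ∈ W, mixedDist G w x ≠ mixedDist G w y

/-- The mixed metric dimension of a finite graph. -/
noncomputable def mdim [Fintype V] (G : SimpleGraph V) : ℕ :=
  sInf {n | ∃ W : Finset V, W.card = n ∧ IsMixedResolving G ↑W}

/-- `y` is a maximal neighbor of `x`: `y` is a neighbor of `x` adjacent to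
every neighbor of `x` other than `y` itself. -/
def IsMaxNeighbor (G : SimpleGraph V) (x y : V) : Prop :=
  G.Adj x y ∧ ∀ z, G.Adj x z → z ≠ y → G.Adj y z

/-- `v` is a cut vertex of `G`: deleting `v` disconnects the graph. -/
def IsCutVertex (G : SimpleGraph V) (v : V) : Prop :=
  ¬ (G.induce {w | w ≠ v}).Connected

section Aux

variable {G : SimpleGraph V}

lemma aux_edge_endpoints (e : G.edgeSet) : ∃ a b, G.Adj a b ∧ (e : Sym2 V) = s(a, b) := by
  obtain ⟨e, he⟩ := e
  induction e using Sym2.ind with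
  | _ a b => exact ⟨a, b, he, rfl⟩

lemma aux_evd (w a b : V) : edgeVertexDist G w s(a, b) = min (G.dist a w) (G.dist b w) := rfl

lemma aux_reachable_induce {w : V} : ∀ {a b : V} (p : G.Walk a b) (ha : a ≠ w) (hb : b ≠ w),
    w ∉ p.support → (G.induce {x | x ≠ w}).Reachable ⟨a, ha⟩ ⟨b, hb⟩ := by
  intro a b p
  induction p with
  | nil => intro ha _ _; rfl
  | @cons u c b h q ih =>
      intro ha hb hw
      have hc : c ≠ w := by
        intro hcw; subst hcw; exact hw (by simp [Walk.support_cons, q.start_mem_support])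
      have hw' : w ∉ q.support := fun hmem => hw (by simp [Walk.support_cons, hmem])
      have hadj : (G.induce {x | x ≠ w}).Adj ⟨u, ha⟩ ⟨c, hc⟩ := by
        simpa using h
      exact hadj.reachable.trans (ih hc hb hw')

lemma aux_dist_add (hG : G.Connected) {w a u : V}
    (h : ∀ p : G.Walk a u, w ∈ p.support) :
    G.dist a u = G.dist a w + G.dist w u := by
  classical
  obtain ⟨p, _, hl⟩ := hG.exists_path_of_dist a u
  have hw := h p
  have h1 : G.dist a w ≤ (p.takeUntil w hw).length := SimpleGraph.dist_le _
  have h2 : G.dist w u ≤ (p.dropUntil w hw).length := SimpleGraph.dist_le _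
  have h3 : (p.takeUntil w hw).length + (p.dropUntil w hw).length = p.length := by
    rw [← Walk.length_append, p.take_spec hw]
  have h4 := hG.dist_triangle (u := a) (v := w) (w := u)
  omega

end Aux

section Aux2

variable {G : SimpleGraph V}

def mixedSupp (G : SimpleGraph V) : V ⊕ G.edgeSet → V → Prop
  | Sum.inl v => fun a => a = v
  | Sum.inr e => fun a => a ∈ (e : Sym2 V)

lemma aux_supp_nonempty (y : V ⊕ G.edgeSet) : ∃ a, mixedSupp G y a := by
  cases y with
  | inl v => exact ⟨v, rfl⟩
  | inr e =>
      obtain ⟨a, b, _, he⟩ := aux_edge_endpoints e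
      exact ⟨a, by simp [mixedSupp, he]⟩

lemma aux_upper (hG : G.Connected) (x : V ⊕ G.edgeSet) (w u : V) :
    mixedDist G u x ≤ mixedDist G w x + G.dist w u := by
  cases x with
  | inl v => exact hG.dist_triangle
  | inr e =>
      obtain ⟨a, b, _, he⟩ := aux_edge_endpoints e
      simp only [mixedDist, he, aux_evd]
      calc min (G.dist a u) (G.dist b u)
          ≤ min (G.dist a w + G.dist w u) (G.dist b w + G.dist w u) :=
            min_le_min hG.dist_triangle hG.dist_triangle
        _ = min (G.dist a w) (G.dist b w) + G.dist w u := min_add_add_right ..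

lemma aux_exact (x : V ⊕ G.edgeSet) (w u : V)
    (h : ∀ a, mixedSupp G x a → G.dist a u = G.dist a w + G.dist w u) :
    mixedDist G u x = mixedDist G w x + G.dist w u := by
  cases x with
  | inl v => exact h v rfl
  | inr e =>
      obtain ⟨a, b, _, he⟩ := aux_edge_endpoints e
      have ha : mixedSupp G (Sum.inr e) a := by simp [mixedSupp, he]
      have hb : mixedSupp G (Sum.inr e) b := by simp [mixedSupp, he]
      simp only [mixedDist, he, aux_evd, h a ha, h b hb]
      exact min_add_add_right ..

lemma aux_supp_ne {w : V} {y : V ⊕ G.edgeSet} (hpos : 0 < mixedDist G w y) :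
    ∀ a, mixedSupp G y a → a ≠ w := by
  cases y with
  | inl v =>
      intro a ha hw
      subst ha; subst hw
      simp [mixedDist, SimpleGraph.dist_self] at hpos
  | inr e =>
      obtain ⟨a, b, _, he⟩ := aux_edge_endpoints e
      simp only [mixedDist, he, aux_evd, lt_min_iff] at hpos
      intro c hc hcw
      subst hcw
      have : c = a ∨ c = b := by simpa [mixedSupp, he] using hc
      rcases this with rfl | rfl
      · simp [SimpleGraph.dist_self] at hpos
      · simp [SimpleGraph.dist_self] at hpos

lemma aux_supp_reach {w : V} {y : V ⊕ G.edgeSet} (hne : ∀ a, mixedSupp G y a → a ≠ w) :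
    ∀ a b (ha : mixedSupp G y a) (hb : mixedSupp G y b),
      (G.induce {x | x ≠ w}).Reachable ⟨a, hne a ha⟩ ⟨b, hne b hb⟩ := by
  cases y with
  | inl v =>
      intro a b ha hb
      cases ha; cases hb; rfl
  | inr e =>
      obtain ⟨c, d, hadj, he⟩ := aux_edge_endpoints e
      intro a b ha hb
      have hc : mixedSupp G (Sum.inr e) c := by simp [mixedSupp, he]
      have hd : mixedSupp G (Sum.inr e) d := by simp [mixedSupp, he]
      have base : (G.induce {x | x ≠ w}).Reachable ⟨c, hne c hc⟩ ⟨d, hne d hd⟩ := by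
        have : (G.induce {x | x ≠ w}).Adj ⟨c, hne c hc⟩ ⟨d, hne d hd⟩ := by simpa using hadj
        exact this.reachable
      have ha' : a = c ∨ a = d := by simpa [mixedSupp, he] using ha
      have hb' : b = c ∨ b = d := by simpa [mixedSupp, he] using hb
      rcases ha' with rfl | rfl <;> rcases hb' with rfl | rfl
      · rfl
      · exact base
      · exact base.symm
      · rfl

end Aux2

lemma aux_resolve_lt [Fintype V] {G : SimpleGraph V} (hG : G.Connected)
    (x y : V ⊕ G.edgeSet) {w : V}
    (hlt : mixedDist G w x < mixedDist G w y) :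
    ∃ u, ¬ IsCutVertex G u ∧ mixedDist G u x ≠ mixedDist G u y := by
  classical
  by_cases hcut : IsCutVertex G w
  swap
  · exact ⟨w, hcut, hlt.ne⟩
  have hpos : 0 < mixedDist G w y := lt_of_le_of_lt (Nat.zero_le _) hlt
  have hyne : ∀ a, mixedSupp G y a → a ≠ w := aux_supp_ne hpos
  rw [IsCutVertex, SimpleGraph.connected_iff] at hcut
  push_neg at hcut
  by_cases hne : Nonempty {x : V // x ∈ {x : V | x ≠ w}}
  swap
  · exfalso
    obtain ⟨a, ha⟩ := aux_supp_nonempty y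
    exact hne ⟨⟨a, hyne a ha⟩⟩
  have hpre : ¬ (G.induce {x : V | x ≠ w}).Preconnected := fun h => (hcut h).false hne.some
  simp only [SimpleGraph.Preconnected] at hpre
  push_neg at hpre
  obtain ⟨s, t, hst⟩ := hpre
  obtain ⟨cy, hcy⟩ := aux_supp_nonempty y
  have hcyw : cy ≠ w := hyne cy hcy
  have ht0 : ∃ t0 : {x : V // x ∈ {x : V | x ≠ w}},
      ¬ (G.induce {x : V | x ≠ w}).Reachable t0 ⟨cy, hcyw⟩ := by
    by_cases h1 : (G.induce {x : V | x ≠ w}).Reachable s ⟨cy, hcyw⟩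
    · exact ⟨t, fun h2 => hst (h1.trans h2.symm)⟩
    · exact ⟨s, h1⟩
  obtain ⟨t0, ht0⟩ := ht0
  have hyfar : ∀ a (ha : mixedSupp G y a),
      ¬ (G.induce {x : V | x ≠ w}).Reachable ⟨a, hyne a ha⟩ t0 := by
    intro a ha hr
    exact ht0 (hr.symm.trans (aux_supp_reach hyne a cy ha hcy))
  obtain ⟨u, hu, hmax'⟩ := Set.exists_max_image
      {z : {x : V // x ∈ {x : V | x ≠ w}} | (G.induce {x : V | x ≠ w}).Reachable t0 z}
      (fun z => G.dist w z.val) (Set.toFinite _) ⟨t0, Reachable.refl t0⟩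
  have hmax : ∀ z : {x : V // x ∈ {x : V | x ≠ w}},
      (G.induce {x : V | x ≠ w}).Reachable t0 z → G.dist w z.val ≤ G.dist w u.val :=
    fun z hz => hmax' z hz
  have huw : (u : V) ≠ w := u.2
  have hwu : w ≠ (u : V) := huw.symm
  -- every vertex of G - u reaches w in G - u
  have hreach_w : ∀ (z : V) (hz : z ≠ (u : V)),
      (G.induce {x : V | x ≠ (u : V)}).Reachable ⟨z, hz⟩ ⟨w, hwu⟩ := by
    intro z hz
    by_cases hzw : z = w
    · subst hzw; exact Reachable.refl _
    obtain ⟨p, hp, hl⟩ := hG.exists_path_of_dist w z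
    by_cases hmem : (u : V) ∈ p.support
    · exfalso
      set q := p.dropUntil (u : V) hmem with hq
      have hwq : w ∉ q.support := by
        intro hwq
        have hwtail : w ∈ q.support.tail := by
          rw [q.support_eq_cons] at hwq
          rcases List.mem_cons.mp hwq with h | h
          · exact (hwu h).elim
          · exact h
        have hps : p.support = (p.takeUntil (u : V) hmem).support ++ q.support.tail := by
          rw [← Walk.support_append, p.take_spec hmem]
        have hnd := hp.support_nodup
        rw [hps] at hnd
        exact (List.nodup_append'.mp hnd).2.2 (p.takeUntil (u : V) hmem).start_mem_support hwtail
      have hr1 : (G.induce {x : V | x ≠ w}).Reachable ⟨(u : V), huw⟩ ⟨z, hzw⟩ :=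
        aux_reachable_induce q huw hzw hwq
      have hzC : (G.induce {x : V | x ≠ w}).Reachable t0 ⟨z, hzw⟩ := hu.trans hr1
      have hle : G.dist w z ≤ G.dist w (u : V) := hmax _ hzC
      have h1 : G.dist w (u : V) ≤ (p.takeUntil (u : V) hmem).length := SimpleGraph.dist_le _
      have h2 : 1 ≤ q.length := by
        rcases Nat.eq_zero_or_pos q.length with h0 | h0
        · exact absurd (Walk.eq_of_length_eq_zero h0).symm hz
        · exact h0
      have h3 : (p.takeUntil (u : V) hmem).length + q.length = p.length := by
        rw [← Walk.length_append, p.take_spec hmem]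
      omega
    · have hmem' : (u : V) ∉ p.reverse.support := by
        simpa [Walk.support_reverse] using hmem
      exact aux_reachable_induce p.reverse hz hwu hmem'
  have hucut : ¬ IsCutVertex G (u : V) := by
    rw [IsCutVertex, not_not, SimpleGraph.connected_iff]
    refine ⟨?_, ⟨⟨w, hwu⟩⟩⟩
    intro z1 z2
    exact (hreach_w z1.val z1.2).trans (hreach_w z2.val z2.2).symm
  have hK : ∀ a, mixedSupp G y a → G.dist a (u : V) = G.dist a w + G.dist w (u : V) := by
    intro a ha
    apply aux_dist_add hG
    intro p
    by_contra hwp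
    exact hyfar a ha ((aux_reachable_induce p (hyne a ha) huw hwp).trans hu.symm)
  have hy_eq : mixedDist G (u : V) y = mixedDist G w y + G.dist w (u : V) := aux_exact _ _ _ hK
  have hx_le : mixedDist G (u : V) x ≤ mixedDist G w x + G.dist w (u : V) := aux_upper hG _ _ _
  exact ⟨(u : V), hucut, by omega⟩

section Aux3
variable {G : SimpleGraph V}

lemma aux_evd_zero {v : V} {g : Sym2 V} (h : v ∈ g) : edgeVertexDist G v g = 0 := by
  induction g using Sym2.ind with
  | _ a b =>
      rw [Sym2.mem_iff] at h
      rcases h with rfl | rfl <;> simp [aux_evd, SimpleGraph.dist_self]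

lemma aux_evd_pos (hG : G.Connected) {v : V} {g : Sym2 V} (h : v ∉ g) :
    0 < edgeVertexDist G v g := by
  induction g using Sym2.ind with
  | _ a b =>
      rw [Sym2.mem_iff] at h
      push_neg at h
      rw [aux_evd, lt_min_iff]
      exact ⟨hG.pos_dist_of_ne (fun hh => h.1 (hh.symm)),
        hG.pos_dist_of_ne (fun hh => h.2 (hh.symm))⟩

lemma aux_key (hG : G.Connected) (a : V) (e : G.edgeSet) :
    ∃ w, G.dist a w ≠ edgeVertexDist G w (e : Sym2 V) := by
  obtain ⟨b, c, hadj, he⟩ := aux_edge_endpoints e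
  by_cases hab : a = b
  · subst hab
    refine ⟨c, ?_⟩
    rw [he, aux_evd]
    have h1 : 0 < G.dist a c := hG.pos_dist_of_ne hadj.ne
    rw [SimpleGraph.dist_self]
    omega
  by_cases hac : a = c
  · subst hac
    refine ⟨b, ?_⟩
    rw [he, aux_evd]
    have h1 : 0 < G.dist a b := hG.pos_dist_of_ne hadj.ne.symm
    rw [SimpleGraph.dist_self]
    omega
  · refine ⟨a, ?_⟩
    rw [he, aux_evd, SimpleGraph.dist_self]
    have h1 : 0 < G.dist b a := hG.pos_dist_of_ne (fun h => hab h.symm)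
    have h2 : 0 < G.dist c a := hG.pos_dist_of_ne (fun h => hac h.symm)
    omega

lemma aux_exists_resolver (hG : G.Connected) (x y : V ⊕ G.edgeSet) (hxy : x ≠ y) :
    ∃ w, mixedDist G w x ≠ mixedDist G w y := by
  classical
  cases x with
  | inl a =>
    cases y with
    | inl b =>
        have hab : a ≠ b := fun h => hxy (h ▸ rfl)
        refine ⟨a, ?_⟩
        simp only [mixedDist, SimpleGraph.dist_self]
        have : 0 < G.dist b a := hG.pos_dist_of_ne (fun h => hab h.symm)
        omega
    | inr e =>
        obtain ⟨w, hw⟩ := aux_key hG a e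
        exact ⟨w, by simpa [mixedDist] using hw⟩
  | inr e =>
    cases y with
    | inl a =>
        obtain ⟨w, hw⟩ := aux_key hG a e
        exact ⟨w, by simp only [mixedDist]; exact fun h => hw (h.symm)⟩
    | inr f =>
        have hef : e ≠ f := fun h => hxy (h ▸ rfl)
        have hvne : (e : Sym2 V) ≠ (f : Sym2 V) := fun h => hef (Subtype.ext h)
        obtain ⟨a, b, hab, he⟩ := aux_edge_endpoints e
        obtain ⟨c, d, hcd, hf⟩ := aux_edge_endpoints f
        have key2 : ∃ v, (v ∈ (e : Sym2 V) ∧ v ∉ (f : Sym2 V)) ∨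
            (v ∈ (f : Sym2 V) ∧ v ∉ (e : Sym2 V)) := by
          by_cases h1 : a ∈ (f : Sym2 V)
          · by_cases h2 : b ∈ (f : Sym2 V)
            · exfalso
              apply hvne
              rw [he, hf]
              rw [hf, Sym2.mem_iff] at h1 h2
              rcases h1 with h1 | h1 <;> rcases h2 with h2 | h2
              · exact absurd (h1.trans h2.symm) hab.ne
              · rw [h1, h2]
              · rw [h1, h2, Sym2.eq_swap]
              · exact absurd (h1.trans h2.symm) hab.ne
            · exact ⟨b, Or.inl ⟨by simp [he], h2⟩⟩
          · exact ⟨a, Or.inl ⟨by simp [he], h1⟩⟩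
        obtain ⟨v, hv | hv⟩ := key2
        · refine ⟨v, ?_⟩
          simp only [mixedDist]
          rw [aux_evd_zero hv.1]
          have := aux_evd_pos hG hv.2
          omega
        · refine ⟨v, ?_⟩
          simp only [mixedDist]
          rw [aux_evd_zero hv.1]
          have := aux_evd_pos hG hv.2
          omega

end Aux3



/-- For a connected graph `G`, `mdim G ≤ |V(G)| - ζ(G)`, where `ζ(G)` is the
number of cut vertices. -/
theorem stmt_12 [Fintype V] (G : SimpleGraph V) (hG : G.Connected) :
    mdim G ≤ Fintype.card V - {v : V | IsCutVertex G v}.ncard := by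
  classical
  have hres : IsMixedResolving G ({v : V | IsCutVertex G v}ᶜ) := by
    intro x y hxy
    obtain ⟨w, hw⟩ := aux_exists_resolver hG x y hxy
    rcases lt_or_gt_of_ne hw with h | h
    · obtain ⟨u, hu1, hu2⟩ := aux_resolve_lt hG x y h
      exact ⟨u, hu1, hu2⟩
    · obtain ⟨u, hu1, hu2⟩ := aux_resolve_lt hG y x h
      exact ⟨u, hu1, hu2.symm⟩
  have hle : mdim G ≤ ({v : V | IsCutVertex G v}ᶜ).toFinset.card := by
    apply Nat.sInf_le
    refine ⟨({v : V | IsCutVertex G v}ᶜ).toFinset, rfl, ?_⟩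
    simpa [Set.coe_toFinset, Set.compl_setOf] using hres
  have h2 : ({v : V | IsCutVertex G v}ᶜ).toFinset.card
      = Fintype.card V - {v : V | IsCutVertex G v}.toFinset.card := by
    rw [Set.toFinset_compl, Finset.card_compl]
  have h3 : {v : V | IsCutVertex G v}.ncard = {v : V | IsCutVertex G v}.toFinset.card :=
    Set.ncard_eq_toFinset_card' _
  omega
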